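/- There is no descending sequence of pointed filters and filter comparisons ⋯ → (F_2, f_2) → (F_1, f_1) → (F_0, f_0), where a filter comparison Z : (F, f) → (G, g) between pointed filters over sets X, Y is a sequence ⟨Z_y : y ∈ Y⟩ of countably complete filters over X with F = G-lim_y Z_y and, for G-almost all y, f(x) < g(y) for Z_y-almost all x. -/

import Mathlib

/-- A filter is countably complete if it is closed under countable intersections. -/
def FCC {T : Type*} (F : Filter T) : Prop :=
  ∀ f : ℕ → Set T, (∀ n, f n ∈ F) → (⋂ n, f n) ∈ F

/-- There is no descending sequence of pointed filters and filter
comparisons `⋯ → (F₂, f₂) → (F₁, f₁) → (F₀, f₀)`: a filter comparison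
`Z : (F, f) → (G, g)` between pointed filters over `X`, `Y` is a sequence
`⟨Z_y : y ∈ Y⟩` of (proper) countably complete filters over `X` with `F = G-lim_y Z_y`
and, for `G`-almost all `y`, `f(x) < g(y)` for `Z_y`-almost all `x`. -/
theorem stmt10 :
    ¬ ∃ (X : ℕ → Type u) (F : ∀ n, Filter (X n)) (f : ∀ n, X n → Ordinal.{v})
        (Z : ∀ n, X n → Filter (X (n + 1))),
      (∀ n, (F n).NeBot) ∧ (∀ n, FCC (F n)) ∧
      (∀ n y, (Z n y).NeBot ∧ FCC (Z n y)) ∧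
      (∀ n (A : Set (X (n + 1))), A ∈ F (n + 1) ↔ {y | A ∈ Z n y} ∈ F n) ∧
      (∀ n, {y | {x | f (n + 1) x < f n y} ∈ Z n y} ∈ F n) := by
  rintro ⟨X, F, f, Z, hFne, hFcc, hZ, hlim, hdec⟩
  classical
  -- B k n : the k-fold pullback of the "descending" sets
  set B : ℕ → ∀ n, Set (X n) :=
    fun k => Nat.rec (motive := fun _ => ∀ n, Set (X n))
      (fun n => {y | {x | f (n + 1) x < f n y} ∈ Z n y})
      (fun _ Bk n => {y | Bk (n + 1) ∈ Z n y}) k with hB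
  have hBmem : ∀ k n, B k n ∈ F n := by
    intro k
    induction k with
    | zero => intro n; exact hdec n
    | succ k ih => intro n; exact (hlim n (B k (n + 1))).mp (ih (n + 1))
  -- from a point in all B k n, produce a next point
  have key : ∀ n (a : X n), (∀ k, a ∈ B k n) →
      ∃ b : X (n + 1), (∀ k, b ∈ B k (n + 1)) ∧ f (n + 1) b < f n a := by
    intro n a ha
    have h1 : {x | f (n + 1) x < f n a} ∈ Z n a := ha 0
    have h2 : ∀ k, B k (n + 1) ∈ Z n a := fun k => ha (k + 1)
    have h3 : ((⋂ k, B k (n + 1)) ∩ {x | f (n + 1) x < f n a}) ∈ Z n a :=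
      Filter.inter_mem ((hZ n a).2 _ h2) h1
    have := (hZ n a).1
    obtain ⟨b, hb⟩ := Filter.nonempty_of_mem h3
    exact ⟨b, fun k => Set.mem_iInter.mp hb.1 k, hb.2⟩
  have base : ∃ a : X 0, ∀ k, a ∈ B k 0 := by
    have := hFne 0
    obtain ⟨a, ha⟩ := Filter.nonempty_of_mem ((hFcc 0) (fun k => B k 0) (fun k => hBmem k 0))
    exact ⟨a, Set.mem_iInter.mp ha⟩
  -- build the descending sequence
  let seq : ∀ n, {a : X n // ∀ k, a ∈ B k n} := fun n =>
    Nat.rec ⟨base.choose, base.choose_spec⟩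
      (fun n p => ⟨(key n p.1 p.2).choose, (key n p.1 p.2).choose_spec.1⟩) n
  have hdesc : ∀ n, f (n + 1) (seq (n + 1)).1 < f n (seq n).1 := fun n =>
    (key n (seq n).1 (seq n).2).choose_spec.2
  exact (RelEmbedding.natGT (fun n => f n (seq n).1) hdesc).not_wellFounded
    wellFounded_lt
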